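/- Let d ≥ 3 be an integer and σ > 0. Then the function f : (0,∞) → (0,∞) defined by f(ρ) := ρ^{d−2} · (1/σ²) ∫₀^∞ e^{−t/σ²} (2πt)^{−d/2} e^{−ρ²/(2t)} dt is strictly decreasing on (0,∞). -/

import Mathlib

open MeasureTheory Real Set

noncomputable def hh (d : ℕ) (σ ρ : ℝ) : ℝ → ℝ :=
  fun u => Real.exp (-(ρ ^ 2 * u) / σ ^ 2) * (2 * Real.pi * u) ^ (-(d : ℝ) / 2) *
    Real.exp (-1 / (2 * u))

lemma hh_pos (d : ℕ) {σ ρ u : ℝ} (hu : 0 < u) : 0 < hh d σ ρ u := by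
  have h2 : (0:ℝ) < 2 * Real.pi * u := by positivity
  unfold hh
  positivity

lemma hh_contOn (d : ℕ) (σ ρ : ℝ) : ContinuousOn (hh d σ ρ) (Ioi 0) := by
  intro u hu
  have hu : (0:ℝ) < u := hu
  apply ContinuousAt.continuousWithinAt
  have h1 : ContinuousAt (fun u : ℝ => Real.exp (-(ρ ^ 2 * u) / σ ^ 2)) u := by fun_prop
  have h2 : ContinuousAt (fun u : ℝ => (2 * Real.pi * u) ^ (-(d : ℝ) / 2)) u := by
    apply ContinuousAt.rpow_const (by fun_prop)
    left; positivity
  have h3 : ContinuousAt (fun u : ℝ => Real.exp (-1 / (2 * u))) u := by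
    apply Real.continuous_exp.continuousAt.comp
    exact ContinuousAt.div continuousAt_const (by fun_prop) (by positivity)
  exact (h1.mul h2).mul h3

lemma pow_div_factorial_le_exp {x : ℝ} (hx : 0 ≤ x) (d : ℕ) :
    x ^ d / Nat.factorial d ≤ Real.exp x := by
  calc x ^ d / Nat.factorial d ≤ ∑ i ∈ Finset.range (d + 1), x ^ i / Nat.factorial i := by
        apply Finset.single_le_sum (f := fun i => x ^ i / (Nat.factorial i : ℝ))
          (fun i _ => by positivity) (Finset.self_mem_range_succ d)
    _ ≤ Real.exp x := Real.sum_le_exp_of_nonneg hx _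

set_option maxHeartbeats 1000000 in
lemma hh_integrable (d : ℕ) {σ ρ : ℝ} (hσ : 0 < σ) (hρ : 0 < ρ) :
    IntegrableOn (hh d σ ρ) (Ioi 0) := by
  have hmeas1 : AEStronglyMeasurable (hh d σ ρ) (volume.restrict (Ioc (0:ℝ) 1)) :=
    ((hh_contOn d σ ρ).mono Ioc_subset_Ioi_self).aestronglyMeasurable measurableSet_Ioc
  have hmeas2 : AEStronglyMeasurable (hh d σ ρ) (volume.restrict (Ioi (1:ℝ))) :=
    ((hh_contOn d σ ρ).mono (fun x (hx : x ∈ Ioi (1:ℝ)) => (mem_Ioi.mpr (lt_trans one_pos (mem_Ioi.mp hx)) : x ∈ Ioi (0:ℝ)))).aestronglyMeasurable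
      measurableSet_Ioi
  have hπ : (0:ℝ) < 2 * Real.pi := by positivity
  -- part 1 : Ioc 0 1, bounded by a constant
  have h1 : IntegrableOn (hh d σ ρ) (Ioc 0 1) := by
    apply Integrable.mono' (g := fun _ => (2 * Real.pi) ^ (-(d:ℝ)/2) * ((Nat.factorial d : ℝ) * 2 ^ d))
      ((integrableOn_const_iff).mpr (Or.inr measure_Ioc_lt_top)) hmeas1
    filter_upwards [ae_restrict_mem measurableSet_Ioc] with u hu
    obtain ⟨hu0, hu1⟩ := hu
    have hQ : Real.exp (-1 / (2 * u)) ≤ (Nat.factorial d : ℝ) * (2 * u) ^ d := by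
      have hy : (0:ℝ) < 1 / (2 * u) := by positivity
      have h := pow_div_factorial_le_exp hy.le d
      have hpos : (0:ℝ) < (1 / (2 * u)) ^ d / Nat.factorial d := by positivity
      have := inv_anti₀ hpos h
      rw [← Real.exp_neg] at this
      have heq : ((1 / (2 * u)) ^ d / (Nat.factorial d : ℝ))⁻¹ = (Nat.factorial d : ℝ) * (2 * u) ^ d := by
        have h2u : (2 * u) ^ d ≠ 0 := by positivity
        rw [inv_div, one_div, inv_pow, div_inv_eq_mul]
      rw [heq] at this
      calc Real.exp (-1 / (2 * u)) = Real.exp (-(1 / (2 * u))) := by rw [neg_div]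
        _ ≤ _ := this
    have hP : (2 * Real.pi * u) ^ (-(d:ℝ)/2)
        = (2 * Real.pi) ^ (-(d:ℝ)/2) * u ^ (-(d:ℝ)/2) :=
      Real.mul_rpow hπ.le hu0.le
    have hE : Real.exp (-(ρ ^ 2 * u) / σ ^ 2) ≤ 1 := by
      rw [← Real.exp_zero]
      apply Real.exp_le_exp.mpr
      have : (0:ℝ) ≤ ρ ^ 2 * u := by positivity
      have hσ2 : (0:ℝ) < σ ^ 2 := by positivity
      rw [neg_div]
      simp only [neg_nonpos]
      positivity
    have hupow : u ^ (-(d:ℝ)/2) * (2 * u) ^ d ≤ 2 ^ d := by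
      have : (2 * u) ^ d = 2 ^ d * u ^ d := mul_pow 2 u d
      rw [this]
      have hud : (u:ℝ) ^ d = u ^ ((d:ℝ)) := (Real.rpow_natCast u d).symm
      have : u ^ (-(d:ℝ)/2) * (2 ^ d * u ^ d) = 2 ^ d * (u ^ (-(d:ℝ)/2) * u ^ ((d:ℝ))) := by
        rw [hud]; ring
      rw [this, ← Real.rpow_add hu0]
      have hexp : -(d:ℝ)/2 + (d:ℝ) = (d:ℝ)/2 := by ring
      rw [hexp]
      have : u ^ ((d:ℝ)/2) ≤ 1 :=
        Real.rpow_le_one hu0.le hu1 (by positivity)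
      nlinarith [pow_pos (by norm_num : (0:ℝ) < 2) d]
    have habs : |hh d σ ρ u| = hh d σ ρ u := abs_of_pos (hh_pos d hu0)
    rw [Real.norm_eq_abs, habs]
    unfold hh
    rw [hP]
    have hPpos : (0:ℝ) ≤ (2 * Real.pi) ^ (-(d:ℝ)/2) := by positivity
    have hup : (0:ℝ) ≤ u ^ (-(d:ℝ)/2) := by positivity
    calc Real.exp (-(ρ ^ 2 * u) / σ ^ 2) * ((2 * Real.pi) ^ (-(d:ℝ)/2) * u ^ (-(d:ℝ)/2)) *
          Real.exp (-1 / (2 * u))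
        ≤ 1 * ((2 * Real.pi) ^ (-(d:ℝ)/2) * u ^ (-(d:ℝ)/2)) * ((Nat.factorial d : ℝ) * (2 * u) ^ d) := by
          apply mul_le_mul _ hQ (Real.exp_pos _).le (by positivity)
          apply mul_le_mul_of_nonneg_right hE (by positivity)
      _ = (2 * Real.pi) ^ (-(d:ℝ)/2) * ((Nat.factorial d : ℝ) * (u ^ (-(d:ℝ)/2) * (2 * u) ^ d)) := by ring
      _ ≤ (2 * Real.pi) ^ (-(d:ℝ)/2) * ((Nat.factorial d : ℝ) * 2 ^ d) := by
          apply mul_le_mul_of_nonneg_left _ hPpos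
          apply mul_le_mul_of_nonneg_left hupow (by positivity)
  -- part 2 : Ioi 1, bounded by exponential decay
  have h2 : IntegrableOn (hh d σ ρ) (Ioi 1) := by
    have hb : (0:ℝ) < ρ ^ 2 / σ ^ 2 := by positivity
    have hint : IntegrableOn (fun u : ℝ => (2 * Real.pi) ^ (-(d:ℝ)/2) *
        Real.exp (-(ρ ^ 2 / σ ^ 2) * u)) (Ioi 1) :=
      (exp_neg_integrableOn_Ioi 1 hb).const_mul _
    apply Integrable.mono' hint hmeas2
    filter_upwards [ae_restrict_mem measurableSet_Ioi] with u hu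
    have hu1 : (1:ℝ) ≤ u := le_of_lt hu
    have hu0 : (0:ℝ) < u := lt_of_lt_of_le one_pos hu1
    have habs : |hh d σ ρ u| = hh d σ ρ u := abs_of_pos (hh_pos d hu0)
    rw [Real.norm_eq_abs, habs]
    unfold hh
    have hEeq : Real.exp (-(ρ ^ 2 * u) / σ ^ 2) = Real.exp (-(ρ ^ 2 / σ ^ 2) * u) := by
      congr 1; field_simp
    have hP : (2 * Real.pi * u) ^ (-(d:ℝ)/2) ≤ (2 * Real.pi) ^ (-(d:ℝ)/2) := by
      rw [Real.mul_rpow hπ.le hu0.le]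
      have : u ^ (-(d:ℝ)/2) ≤ 1 := by
        apply Real.rpow_le_one_of_one_le_of_nonpos hu1
        have : (0:ℝ) ≤ (d:ℝ) := Nat.cast_nonneg d
        linarith
      nlinarith [Real.rpow_pos_of_pos hπ (-(d:ℝ)/2)]
    have hQ : Real.exp (-1 / (2 * u)) ≤ 1 := by
      rw [← Real.exp_zero]
      apply Real.exp_le_exp.mpr
      rw [neg_div]
      simp only [neg_nonpos]
      positivity
    rw [hEeq]
    calc Real.exp (-(ρ ^ 2 / σ ^ 2) * u) * (2 * Real.pi * u) ^ (-(d:ℝ)/2) *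
          Real.exp (-1 / (2 * u))
        ≤ Real.exp (-(ρ ^ 2 / σ ^ 2) * u) * (2 * Real.pi) ^ (-(d:ℝ)/2) * 1 := by
          apply mul_le_mul _ hQ (Real.exp_pos _).le (by positivity)
          apply mul_le_mul_of_nonneg_left hP (Real.exp_pos _).le
      _ = (2 * Real.pi) ^ (-(d:ℝ)/2) * Real.exp (-(ρ ^ 2 / σ ^ 2) * u) := by ring
  have := h1.union h2
  rwa [Set.Ioc_union_Ioi_eq_Ioi (le_of_lt one_pos)] at this

lemma change_of_var (d : ℕ) (σ : ℝ) {ρ : ℝ} (hρ : 0 < ρ) :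
    ρ ^ ((d : ℝ) - 2) *
      ((1 / σ ^ 2) * ∫ t in Set.Ioi (0 : ℝ),
        Real.exp (-t / σ ^ 2) * (2 * Real.pi * t) ^ (-(d : ℝ) / 2) *
          Real.exp (-ρ ^ 2 / (2 * t)))
    = (1 / σ ^ 2) * ∫ u in Set.Ioi (0 : ℝ), hh d σ ρ u := by
  set g : ℝ → ℝ := fun t => Real.exp (-t / σ ^ 2) * (2 * Real.pi * t) ^ (-(d : ℝ) / 2) *
    Real.exp (-ρ ^ 2 / (2 * t)) with hg
  have h2 : (0:ℝ) < ρ ^ 2 := by positivity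
  have hcv : (∫ u in Ioi (0:ℝ), g (ρ ^ 2 * u)) = (ρ ^ 2)⁻¹ • ∫ t in Ioi (ρ ^ 2 * 0), g t :=
    integral_comp_mul_left_Ioi g 0 h2
  rw [mul_zero, smul_eq_mul] at hcv
  have hIg : (∫ t in Ioi (0:ℝ), g t) = ρ ^ 2 * ∫ u in Ioi (0:ℝ), g (ρ ^ 2 * u) := by
    rw [hcv]; field_simp
  rw [hIg]
  have : ρ ^ ((d : ℝ) - 2) * (1 / σ ^ 2 * (ρ ^ 2 * ∫ u in Ioi (0:ℝ), g (ρ ^ 2 * u)))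
      = (1 / σ ^ 2) * ((ρ ^ ((d : ℝ) - 2) * ρ ^ 2) * ∫ u in Ioi (0:ℝ), g (ρ ^ 2 * u)) := by
    ring
  rw [this, ← integral_const_mul]
  congr 1
  apply setIntegral_congr_fun measurableSet_Ioi
  intro u hu
  have hu : (0:ℝ) < u := hu
  have hπ : (0:ℝ) < 2 * Real.pi := by positivity
  have e3 : Real.exp (-ρ ^ 2 / (2 * (ρ ^ 2 * u))) = Real.exp (-1 / (2 * u)) := by
    congr 1
    field_simp
  have e2 : (2 * Real.pi * (ρ ^ 2 * u)) ^ (-(d : ℝ) / 2)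
      = (2 * Real.pi * u) ^ (-(d : ℝ) / 2) * ρ ^ (-(d : ℝ)) := by
    have hre : 2 * Real.pi * (ρ ^ 2 * u) = (2 * Real.pi * u) * ρ ^ 2 := by ring
    rw [hre, Real.mul_rpow (by positivity) (by positivity),
      ← Real.rpow_natCast ρ 2, ← Real.rpow_mul hρ.le]
    rw [show ((2:ℕ):ℝ) * (-(d:ℝ)/2) = -(d:ℝ) by push_cast; ring]
  have hpow : ρ ^ ((d : ℝ) - 2) * ρ ^ 2 * ρ ^ (-(d : ℝ)) = 1 := by
    rw [← Real.rpow_natCast ρ 2, ← Real.rpow_add hρ, ← Real.rpow_add hρ]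
    norm_num
  show ρ ^ ((d : ℝ) - 2) * ρ ^ 2 * g (ρ ^ 2 * u) = hh d σ ρ u
  rw [hg]
  simp only []
  rw [e2, e3]
  unfold hh
  calc ρ ^ ((d : ℝ) - 2) * ρ ^ 2 *
        (Real.exp (-(ρ ^ 2 * u) / σ ^ 2) * ((2 * Real.pi * u) ^ (-(d : ℝ) / 2) * ρ ^ (-(d : ℝ))) *
          Real.exp (-1 / (2 * u)))
      = (ρ ^ ((d : ℝ) - 2) * ρ ^ 2 * ρ ^ (-(d : ℝ))) *
        (Real.exp (-(ρ ^ 2 * u) / σ ^ 2) * (2 * Real.pi * u) ^ (-(d : ℝ) / 2) *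
          Real.exp (-1 / (2 * u))) := by ring
    _ = _ := by rw [hpow, one_mul]

/-- The radial profile `ρ ↦ ρ^{d-2} G_{σ²}(ρ)` of the resolvent kernel is strictly
decreasing on `(0,∞)`. -/
theorem stmt4 (d : ℕ) (hd : 3 ≤ d) (σ : ℝ) (hσ : 0 < σ) :
    StrictAntiOn
      (fun ρ : ℝ => ρ ^ ((d : ℝ) - 2) *
        ((1 / σ ^ 2) * ∫ t in Set.Ioi (0 : ℝ),
          Real.exp (-t / σ ^ 2) * (2 * Real.pi * t) ^ (-(d : ℝ) / 2) *
            Real.exp (-ρ ^ 2 / (2 * t))))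
      (Set.Ioi 0) := by
  intro a ha b hb hab
  have ha : (0:ℝ) < a := ha
  have hb : (0:ℝ) < b := hb
  simp only []
  rw [change_of_var d σ ha, change_of_var d σ hb]
  have hσ2 : (0:ℝ) < 1 / σ ^ 2 := by positivity
  apply mul_lt_mul_of_pos_left _ hσ2
  -- strict integral inequality
  have hIa := hh_integrable d hσ ha
  have hIb := hh_integrable d hσ hb
  have key : 0 < ∫ u in Ioi (0:ℝ), (hh d σ a u - hh d σ b u) := by
    have hlt : ∀ u : ℝ, 0 < u → hh d σ b u < hh d σ a u := by
      intro u hu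
      unfold hh
      have hP : (0:ℝ) < (2 * Real.pi * u) ^ (-(d : ℝ) / 2) :=
        Real.rpow_pos_of_pos (by positivity) _
      have hQ : (0:ℝ) < Real.exp (-1 / (2 * u)) := Real.exp_pos _
      have harg : -(b ^ 2 * u) / σ ^ 2 < -(a ^ 2 * u) / σ ^ 2 := by
        have hσ2' : (0:ℝ) < σ ^ 2 := by positivity
        have h1 : a ^ 2 * u < b ^ 2 * u := by
          nlinarith [mul_pos (mul_pos (sub_pos.mpr hab) (by linarith : (0:ℝ) < a + b)) hu]
        apply div_lt_div_of_pos_right (by linarith) hσ2'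
      exact mul_lt_mul_of_pos_right
        (mul_lt_mul_of_pos_right (Real.exp_lt_exp.mpr harg) hP) hQ
    rw [setIntegral_pos_iff_support_of_nonneg_ae]
    · have hsub : Ioi (0:ℝ) ⊆ Function.support (fun u => hh d σ a u - hh d σ b u) ∩ Ioi 0 := by
        intro u hu
        refine ⟨?_, hu⟩
        have := hlt u hu
        simp only [Function.mem_support]
        intro hzero
        linarith
      calc (0:ENNReal) < volume (Ioi (0:ℝ)) := by simp [Real.volume_Ioi]
        _ ≤ _ := measure_mono hsub
    · filter_upwards [ae_restrict_mem measurableSet_Ioi] with u hu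
      have := hlt u hu
      simp only [Pi.zero_apply]
      linarith
    · exact hIa.sub hIb
  rw [integral_sub hIa hIb] at key
  linarith
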